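/- Let n = 2 and define Q(z,χ,τ) := τ + 2i·z₁χ₁ and Q′(z,χ,τ) := τ + 2i·(z₁χ₁ + z₂χ₂) on ℂ² × ℂ² × ℂ. Then Q and Q′ are real normal defining functions of dimension 2, and the quadruple f(z,w) := (z₂ + z₁z₂, −z₂), g(z,w) := 2wz₂, f̃(χ,τ) := (2χ₁, 2χ₁ + iτ), g̃(χ,τ) := 0 is an HSPM sending (ℳ,0) into (ℳ′,0) for which: g does not vanish identically while g̃ ≡ 0, and det(∂f/∂z(z,0)) = −z₂ does not vanish identically while det(∂f̃/∂χ(χ,0)) ≡ 0 identically. -/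

import Mathlib

open Filter Topology Complex

namespace HSPMpaper

variable {n : ℕ}

/-- Partial derivative of `F` in the `i`-th coordinate direction. -/
noncomputable def pd (i : Fin n) (F : (Fin n → ℂ) → ℂ) : (Fin n → ℂ) → ℂ :=
  fun z => fderiv ℂ F z (Pi.single i 1)

/-- Iterated partial derivative `∂^α` for a multi-index `α`. -/
noncomputable def mpd (α : Fin n → ℕ) (F : (Fin n → ℂ) → ℂ) : (Fin n → ℂ) → ℂ :=
  ((List.ofFn fun i : Fin n => (pd i)^[α i]).foldr (· ∘ ·) id) F

/-- Componentwise complex conjugation on `ℂⁿ`. -/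
def conjV (z : Fin n → ℂ) : Fin n → ℂ := fun i => starRingEnd ℂ (z i)

/-- The conjugate defining function `Q̄(χ,z,τ) = conj (Q (conj χ) (conj z) (conj τ))`. -/
def QBar (Q : (Fin n → ℂ) → (Fin n → ℂ) → ℂ → ℂ) : (Fin n → ℂ) → (Fin n → ℂ) → ℂ → ℂ :=
  fun χ z τ => starRingEnd ℂ (Q (conjV χ) (conjV z) (starRingEnd ℂ τ))

/-- `Q` is a normal defining function (of dimension `n`): holomorphic near the origin of
`ℂⁿ × ℂⁿ × ℂ` and satisfying `Q(0,χ,τ) = τ` and `Q(z,0,τ) = τ` near `0`. -/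
def IsNormalDF (Q : (Fin n → ℂ) → (Fin n → ℂ) → ℂ → ℂ) : Prop :=
  (∀ᶠ p in 𝓝 (0 : (Fin n → ℂ) × (Fin n → ℂ) × ℂ),
      AnalyticAt ℂ (fun q : (Fin n → ℂ) × (Fin n → ℂ) × ℂ => Q q.1 q.2.1 q.2.2) p) ∧
  (∀ᶠ p in 𝓝 (0 : (Fin n → ℂ) × (Fin n → ℂ) × ℂ),
      Q 0 p.2.1 p.2.2 = p.2.2 ∧ Q p.1 0 p.2.2 = p.2.2)

/-- `Q` is a real normal defining function: normal and `Q(z,χ,Q̄(χ,z,w)) = w` near `0`. -/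
def IsRealNormalDF (Q : (Fin n → ℂ) → (Fin n → ℂ) → ℂ → ℂ) : Prop :=
  IsNormalDF Q ∧
  ∀ᶠ p in 𝓝 (0 : (Fin n → ℂ) × (Fin n → ℂ) × ℂ),
    Q p.1 p.2.1 (QBar Q p.2.1 p.1 p.2.2) = p.2.2

/-- `(f,g,f̃,g̃)` is a holomorphic Segre preserving map sending `(ℳ,0)` into `(ℳ',0)`. -/
def IsHSPM (Q Q' : (Fin n → ℂ) → (Fin n → ℂ) → ℂ → ℂ)
    (f : (Fin n → ℂ) → ℂ → Fin n → ℂ) (g : (Fin n → ℂ) → ℂ → ℂ)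
    (ft : (Fin n → ℂ) → ℂ → Fin n → ℂ) (gt : (Fin n → ℂ) → ℂ → ℂ) : Prop :=
  (∀ᶠ p in 𝓝 (0 : (Fin n → ℂ) × ℂ), AnalyticAt ℂ (fun q : (Fin n → ℂ) × ℂ => f q.1 q.2) p) ∧
  (∀ᶠ p in 𝓝 (0 : (Fin n → ℂ) × ℂ), AnalyticAt ℂ (fun q : (Fin n → ℂ) × ℂ => g q.1 q.2) p) ∧
  (∀ᶠ p in 𝓝 (0 : (Fin n → ℂ) × ℂ), AnalyticAt ℂ (fun q : (Fin n → ℂ) × ℂ => ft q.1 q.2) p) ∧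
  (∀ᶠ p in 𝓝 (0 : (Fin n → ℂ) × ℂ), AnalyticAt ℂ (fun q : (Fin n → ℂ) × ℂ => gt q.1 q.2) p) ∧
  f 0 0 = 0 ∧ g 0 0 = 0 ∧ ft 0 0 = 0 ∧ gt 0 0 = 0 ∧
  ∀ᶠ p in 𝓝 (0 : (Fin n → ℂ) × (Fin n → ℂ) × ℂ),
    g p.1 (Q p.1 p.2.1 p.2.2) =
      Q' (f p.1 (Q p.1 p.2.1 p.2.2)) (ft p.2.1 p.2.2) (gt p.2.1 p.2.2)

/-- `M` is of finite type at `0`: `(z,χ) ↦ Q(z,χ,0)` does not vanish identically near `0`. -/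
def FiniteType (Q : (Fin n → ℂ) → (Fin n → ℂ) → ℂ → ℂ) : Prop :=
  ¬ ∀ᶠ p in 𝓝 (0 : (Fin n → ℂ) × (Fin n → ℂ)), Q p.1 p.2 0 = 0

/-- Jacobian matrix of `z ↦ f(z,0)` at `z`. -/
noncomputable def jacz (f : (Fin n → ℂ) → ℂ → Fin n → ℂ) (z : Fin n → ℂ) :
    Matrix (Fin n) (Fin n) ℂ :=
  Matrix.of fun i j => pd j (fun z' => f z' 0 i) z

/-- `ℋ` is Segre transversal to `ℳ'` at `0`: `∂g/∂w(0,0) ≠ 0`. -/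
noncomputable def SegreTransversal (g : (Fin n → ℂ) → ℂ → ℂ) : Prop :=
  deriv (fun w => g 0 w) 0 ≠ 0

/-- `ℋ` is totally Segre nondegenerate at `0`. -/
def TotallySegreNondeg (f ft : (Fin n → ℂ) → ℂ → Fin n → ℂ) : Prop :=
  (¬ ∀ᶠ z in 𝓝 (0 : Fin n → ℂ), (jacz f z).det = 0) ∧
  (¬ ∀ᶠ χ in 𝓝 (0 : Fin n → ℂ), (jacz ft χ).det = 0)

/-- `ℋ` is transversally null: `g ≡ 0` and `g̃ ≡ 0` near `0`. -/
def TransversallyNull (g gt : (Fin n → ℂ) → ℂ → ℂ) : Prop :=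
  (∀ᶠ p in 𝓝 (0 : (Fin n → ℂ) × ℂ), g p.1 p.2 = 0) ∧
  (∀ᶠ p in 𝓝 (0 : (Fin n → ℂ) × ℂ), gt p.1 p.2 = 0)

/-- The `k`-th coordinate direction in `ℂⁿ × ℂ`. -/
noncomputable def dirCT (n : ℕ) (k : Fin (n + 1)) : (Fin n → ℂ) × ℂ :=
  if h : (k : ℕ) < n then (Pi.single ⟨k, h⟩ 1, 0) else (0, 1)

/-- `M` is holomorphically nondegenerate at `0`: for some `K`, the map
`(χ,τ) ↦ (∂_z^α Q(0,χ,τ))_{|α| ≤ K}` has generic rank `n+1`. -/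
def HolNondeg (Q : (Fin n → ℂ) → (Fin n → ℂ) → ℂ → ℂ) : Prop :=
  ∃ K : ℕ, ∃ A : Fin (n + 1) → Fin n → ℕ, (∀ j, (∑ i, A j i) ≤ K) ∧
    ¬ ∀ᶠ p in 𝓝 (0 : (Fin n → ℂ) × ℂ),
      (Matrix.of fun j k : Fin (n + 1) =>
        fderiv ℂ (fun q : (Fin n → ℂ) × ℂ => mpd (A j) (fun z => Q z q.1 q.2) 0) p
          (dirCT n k)).det = 0

/-- `M` is of class `𝒞` at `0`: for some `K`, the map
`χ ↦ (∂_z^α Q(0,χ,0))_{|α| ≤ K}` has generic rank `n`. -/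
def ClassC (Q : (Fin n → ℂ) → (Fin n → ℂ) → ℂ → ℂ) : Prop :=
  ∃ K : ℕ, ∃ A : Fin n → Fin n → ℕ, (∀ j, (∑ i, A j i) ≤ K) ∧
    ¬ ∀ᶠ χ in 𝓝 (0 : Fin n → ℂ),
      (Matrix.of fun j k : Fin n =>
        pd k (fun χ' => mpd (A j) (fun z => Q z χ' 0) 0) χ).det = 0

/-- `M` is finitely nondegenerate at `0`: for some `K`, the vectors
`∂_χ ∂_z^α Q(0,0,0)`, `|α| ≤ K`, span `ℂⁿ`. -/
def FinNondeg (Q : (Fin n → ℂ) → (Fin n → ℂ) → ℂ → ℂ) : Prop :=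
  ∃ K : ℕ, Submodule.span ℂ
    {v : Fin n → ℂ | ∃ α : Fin n → ℕ, (∑ i, α i) ≤ K ∧
      v = fun i => pd i (fun χ => mpd α (fun z => Q z χ 0) 0) 0} = ⊤

/-- Full Jacobian matrix of `(z,w) ↦ (f(z,w), g(z,w))` at `p ∈ ℂⁿ × ℂ`. -/
noncomputable def jacFull (f : (Fin n → ℂ) → ℂ → Fin n → ℂ) (g : (Fin n → ℂ) → ℂ → ℂ)
    (p : (Fin n → ℂ) × ℂ) : Matrix (Fin (n + 1)) (Fin (n + 1)) ℂ :=
  Matrix.of fun i k =>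
    fderiv ℂ (fun q : (Fin n → ℂ) × ℂ => (Fin.snoc (f q.1 q.2) (g q.1 q.2) : Fin (n + 1) → ℂ) i) p (dirCT n k)

/-- The degree-`d` homogeneous term of the Taylor series of `φ` at `0`. -/
noncomputable def homogTerm (d : ℕ) (φ : (Fin n → ℂ) → ℂ) : (Fin n → ℂ) → ℂ :=
  fun z => iteratedFDeriv ℂ d φ 0 (fun _ => z) / (d.factorial : ℂ)

/-- The order of vanishing of `φ` at `0`. -/
noncomputable def vanishOrder (φ : (Fin n → ℂ) → ℂ) : ℕ :=
  sInf {d | homogTerm d φ ≠ 0}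



section Aux

private lemma aV (i : Fin 2) (p : (Fin 2 → ℂ) × ℂ) :
    AnalyticAt ℂ (fun q : (Fin 2 → ℂ) × ℂ => q.1 i) p :=
  ((ContinuousLinearMap.proj i).comp (ContinuousLinearMap.fst ℂ (Fin 2 → ℂ) ℂ)).analyticAt p

private lemma aW (p : (Fin 2 → ℂ) × ℂ) : AnalyticAt ℂ (fun q : (Fin 2 → ℂ) × ℂ => q.2) p :=
  (ContinuousLinearMap.snd ℂ (Fin 2 → ℂ) ℂ).analyticAt p

private lemma bV1 (i : Fin 2) (p : (Fin 2 → ℂ) × (Fin 2 → ℂ) × ℂ) :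
    AnalyticAt ℂ (fun q : (Fin 2 → ℂ) × (Fin 2 → ℂ) × ℂ => q.1 i) p :=
  ((ContinuousLinearMap.proj i).comp
    (ContinuousLinearMap.fst ℂ (Fin 2 → ℂ) ((Fin 2 → ℂ) × ℂ))).analyticAt p

private lemma bV2 (i : Fin 2) (p : (Fin 2 → ℂ) × (Fin 2 → ℂ) × ℂ) :
    AnalyticAt ℂ (fun q : (Fin 2 → ℂ) × (Fin 2 → ℂ) × ℂ => q.2.1 i) p :=
  (((ContinuousLinearMap.proj i).comp (ContinuousLinearMap.fst ℂ (Fin 2 → ℂ) ℂ)).comp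
    (ContinuousLinearMap.snd ℂ (Fin 2 → ℂ) ((Fin 2 → ℂ) × ℂ))).analyticAt p

private lemma bT (p : (Fin 2 → ℂ) × (Fin 2 → ℂ) × ℂ) :
    AnalyticAt ℂ (fun q : (Fin 2 → ℂ) × (Fin 2 → ℂ) × ℂ => q.2.2) p :=
  ((ContinuousLinearMap.snd ℂ (Fin 2 → ℂ) ℂ).comp
    (ContinuousLinearMap.snd ℂ (Fin 2 → ℂ) ((Fin 2 → ℂ) × ℂ))).analyticAt p

private lemma hp (i : Fin 2) (z : Fin 2 → ℂ) :
    HasFDerivAt (fun z' : Fin 2 → ℂ => z' i)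
      (ContinuousLinearMap.proj i : (Fin 2 → ℂ) →L[ℂ] ℂ) z :=
  (ContinuousLinearMap.proj i : (Fin 2 → ℂ) →L[ℂ] ℂ).hasFDerivAt

private lemma detf (z : Fin 2 → ℂ) :
    (jacz (fun z (_ : ℂ) => ![z 1 + z 0 * z 1, -(z 1)]) z).det = -(z 1) := by
  have h0 : HasFDerivAt (fun z' : Fin 2 → ℂ => z' 1 + z' 0 * z' 1)
      ((ContinuousLinearMap.proj 1 : (Fin 2 → ℂ) →L[ℂ] ℂ) +
        (z 0 • (ContinuousLinearMap.proj 1 : (Fin 2 → ℂ) →L[ℂ] ℂ) +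
         z 1 • (ContinuousLinearMap.proj 0 : (Fin 2 → ℂ) →L[ℂ] ℂ))) z :=
    (hp 1 z).add ((hp 0 z).mul (hp 1 z))
  have h1 : HasFDerivAt (fun z' : Fin 2 → ℂ => -(z' 1))
      (-(ContinuousLinearMap.proj 1 : (Fin 2 → ℂ) →L[ℂ] ℂ)) z := (hp 1 z).neg
  simp only [jacz, Matrix.det_fin_two, Matrix.of_apply, Matrix.cons_val_zero,
    Matrix.cons_val_one, Matrix.head_cons, pd, h0.fderiv, h1.fderiv]
  simp [Pi.single_apply]

private lemma detft (χ : Fin 2 → ℂ) :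
    (jacz (fun χ (τ : ℂ) => ![2 * χ 0, 2 * χ 0 + Complex.I * τ]) χ).det = 0 := by
  have h0 : HasFDerivAt (fun χ' : Fin 2 → ℂ => 2 * χ' 0)
      ((2:ℂ) • (ContinuousLinearMap.proj 0 : (Fin 2 → ℂ) →L[ℂ] ℂ)) χ := (hp 0 χ).const_mul 2
  have h1 : HasFDerivAt (fun χ' : Fin 2 → ℂ => 2 * χ' 0 + Complex.I * 0)
      ((2:ℂ) • (ContinuousLinearMap.proj 0 : (Fin 2 → ℂ) →L[ℂ] ℂ)) χ := by
    simpa using h0.add_const (Complex.I * 0)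
  simp only [jacz, Matrix.det_fin_two, Matrix.of_apply, Matrix.cons_val_zero,
    Matrix.cons_val_one, Matrix.head_cons, pd, h0.fderiv, h1.fderiv]
  simp [Pi.single_apply]

private lemma st1 : IsRealNormalDF
    (fun z χ τ => τ + 2 * Complex.I * (z 0 * χ 0) : (Fin 2 → ℂ) → (Fin 2 → ℂ) → ℂ → ℂ) := by
  refine ⟨⟨Filter.Eventually.of_forall fun p => ?_, Filter.Eventually.of_forall fun p => ?_⟩,
    Filter.Eventually.of_forall fun p => ?_⟩
  · exact (bT p).add (analyticAt_const.mul ((bV1 0 p).mul (bV2 0 p)))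
  · constructor <;> simp
  · simp [QBar, conjV, map_ofNat]
    ring

private lemma st2 : IsRealNormalDF
    (fun z χ τ => τ + 2 * Complex.I * (z 0 * χ 0 + z 1 * χ 1) :
      (Fin 2 → ℂ) → (Fin 2 → ℂ) → ℂ → ℂ) := by
  refine ⟨⟨Filter.Eventually.of_forall fun p => ?_, Filter.Eventually.of_forall fun p => ?_⟩,
    Filter.Eventually.of_forall fun p => ?_⟩
  · exact (bT p).add (analyticAt_const.mul (((bV1 0 p).mul (bV2 0 p)).add
      ((bV1 1 p).mul (bV2 1 p))))
  · constructor <;> simp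
  · simp [QBar, conjV, map_ofNat]
    ring

private lemma st3 : IsHSPM
    (fun z χ τ => τ + 2 * Complex.I * (z 0 * χ 0) : (Fin 2 → ℂ) → (Fin 2 → ℂ) → ℂ → ℂ)
    (fun z χ τ => τ + 2 * Complex.I * (z 0 * χ 0 + z 1 * χ 1))
    (fun z _ => ![z 1 + z 0 * z 1, -(z 1)]) (fun z w => 2 * w * z 1)
    (fun χ τ => ![2 * χ 0, 2 * χ 0 + Complex.I * τ]) (fun _ _ => 0) := by
  refine ⟨Filter.Eventually.of_forall fun p => ?_, Filter.Eventually.of_forall fun p => ?_,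
    Filter.Eventually.of_forall fun p => ?_, Filter.Eventually.of_forall fun p => ?_,
    ?_, by norm_num, ?_, rfl, Filter.Eventually.of_forall fun p => ?_⟩
  · rw [analyticAt_pi_iff]
    intro i; fin_cases i
    · exact (aV 1 p).add ((aV 0 p).mul (aV 1 p))
    · exact (aV 1 p).neg
  · exact (analyticAt_const.mul (aW p)).mul (aV 1 p)
  · rw [analyticAt_pi_iff]
    intro i; fin_cases i
    · exact analyticAt_const.mul (aV 0 p)
    · exact (analyticAt_const.mul (aV 0 p)).add (analyticAt_const.mul (aW p))
  · exact analyticAt_const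
  · funext i; fin_cases i <;> simp
  · funext i; fin_cases i <;> simp
  · simp only [Matrix.cons_val_zero, Matrix.cons_val_one, Matrix.head_cons]
    linear_combination (2 * p.2.2 * p.1 1) * Complex.I_mul_I

private lemma st4 : ¬ ∀ᶠ p in 𝓝 (0 : (Fin 2 → ℂ) × ℂ), 2 * p.2 * p.1 1 = 0 := by
  intro h
  have hc : Continuous fun t : ℂ => ((![0, t] : Fin 2 → ℂ), t) := by
    refine Continuous.prodMk (continuous_pi fun i => ?_) continuous_id
    fin_cases i
    · simpa using continuous_const
    · exact continuous_id
  have h0 : (fun t : ℂ => ((![0, t] : Fin 2 → ℂ), t)) 0 = 0 := by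
    refine Prod.ext ?_ rfl
    funext i; fin_cases i <;> rfl
  have h2 := (hc.tendsto' 0 0 h0).eventually h
  have h3 : ∀ᶠ t in 𝓝[≠] (0:ℂ), 2 * t * t = 0 := by
    filter_upwards [nhdsWithin_le_nhds h2] with t ht
    simpa using ht
  obtain ⟨t, ht, ht0⟩ := (h3.and eventually_mem_nhdsWithin).exists
  simp only [Set.mem_compl_iff, Set.mem_singleton_iff] at ht0
  simp [mul_eq_zero, ht0] at ht

private lemma st7 :
    ¬ ∀ᶠ z in 𝓝 (0 : Fin 2 → ℂ),
      (jacz (fun z (_ : ℂ) => ![z 1 + z 0 * z 1, -(z 1)]) z).det = 0 := by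
  intro h
  have h' : ∀ᶠ z in 𝓝 (0 : Fin 2 → ℂ), -(z 1) = 0 := h.mono fun z hz => by
    rw [← detf z]; exact hz
  have hc : Continuous fun t : ℂ => (![0, t] : Fin 2 → ℂ) := by
    refine continuous_pi fun i => ?_
    fin_cases i
    · simpa using continuous_const
    · exact continuous_id
  have h0 : (fun t : ℂ => (![0, t] : Fin 2 → ℂ)) 0 = 0 := by
    funext i; fin_cases i <;> rfl
  have h2 := (hc.tendsto' 0 0 h0).eventually h'
  have h3 : ∀ᶠ t in 𝓝[≠] (0:ℂ), -t = 0 := by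
    filter_upwards [nhdsWithin_le_nhds h2] with t ht
    simpa using ht
  obtain ⟨t, ht, ht0⟩ := (h3.and eventually_mem_nhdsWithin).exists
  simp only [Set.mem_compl_iff, Set.mem_singleton_iff] at ht0
  simp [ht0] at ht

end Aux

/-- Remark 1.1: an explicit HSPM between the complexifications of
`Im w = |z₁|²` and `Im w' = |z₁'|² + |z₂'|²` in `ℂ³` with `g ≢ 0` but `g̃ ≡ 0`, and
`det f_z(·,0) ≢ 0` but `det f̃_χ(·,0) ≡ 0`. -/
theorem statement12 :
    let Q : (Fin 2 → ℂ) → (Fin 2 → ℂ) → ℂ → ℂ :=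
      fun z χ τ => τ + 2 * Complex.I * (z 0 * χ 0)
    let Q' : (Fin 2 → ℂ) → (Fin 2 → ℂ) → ℂ → ℂ :=
      fun z χ τ => τ + 2 * Complex.I * (z 0 * χ 0 + z 1 * χ 1)
    let f : (Fin 2 → ℂ) → ℂ → Fin 2 → ℂ := fun z _ => ![z 1 + z 0 * z 1, -(z 1)]
    let g : (Fin 2 → ℂ) → ℂ → ℂ := fun z w => 2 * w * z 1
    let ft : (Fin 2 → ℂ) → ℂ → Fin 2 → ℂ := fun χ τ => ![2 * χ 0, 2 * χ 0 + Complex.I * τ]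
    let gt : (Fin 2 → ℂ) → ℂ → ℂ := fun _ _ => 0
    IsRealNormalDF Q ∧ IsRealNormalDF Q' ∧ IsHSPM Q Q' f g ft gt ∧
    (¬ ∀ᶠ p in 𝓝 (0 : (Fin 2 → ℂ) × ℂ), g p.1 p.2 = 0) ∧
    (∀ (χ : Fin 2 → ℂ) (τ : ℂ), gt χ τ = 0) ∧
    (∀ z : Fin 2 → ℂ, (jacz f z).det = -(z 1)) ∧
    (¬ ∀ᶠ z in 𝓝 (0 : Fin 2 → ℂ), (jacz f z).det = 0) ∧
    (∀ χ : Fin 2 → ℂ, (jacz ft χ).det = 0) := by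
  exact ⟨st1, st2, st3, st4, fun _ _ => rfl, detf, st7, detft⟩

end HSPMpaper
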